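/- arXiv:1602.03899 — 2 statements merged into one kernel-verified Lean document; each statement's English description precedes it below -/
import Mathlib

section
/- Let G be a graph such that M = M[IAS(G)] is 3-connected (τ(M) ≥ 3), with ground set W = W(G), and let S be an ordinary 3-separation of M. Then S is sequential if and only if |S| = 3 or |W−S| = 3. -/
open scoped ENat

variable {V : Type*} [Fintype V] [DecidableEq V]

/-- The column of the matrix `IAS(G) = (I | A | A+I)` indexed by `(v, i)`:
`i = 0` gives `φ(v)` (identity column), `i = 1` gives `χ(v)` (column of `A`),
`i = 2` gives `ψ(v)` (column of `A + I`). -/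
def iasCol (A : Matrix V V (ZMod 2)) : V × Fin 3 → V → ZMod 2 :=
  fun p w =>
    if p.2 = 0 then (if w = p.1 then 1 else 0)
    else if p.2 = 1 then A w p.1
    else A w p.1 + (if w = p.1 then 1 else 0)

/-- The rank of a subset of the ground set `W(G) = V × Fin 3` of the isotropic
matroid: the GF(2)-rank of the corresponding set of columns. -/
noncomputable def iasRank (A : Matrix V V (ZMod 2)) (S : Set (V × Fin 3)) : ℕ :=
  Module.finrank (ZMod 2) (Submodule.span (ZMod 2) (iasCol A '' S))

/-- The connectivity function `λ(S) = r(S) + r(W - S) - r(M)`. -/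
noncomputable def iasLambda (A : Matrix V V (ZMod 2)) (S : Set (V × Fin 3)) : ℕ :=
  iasRank A S + iasRank A Sᶜ - iasRank A Set.univ

/-- Independence in the isotropic matroid. -/
def iasIndep (A : Matrix V V (ZMod 2)) (S : Set (V × Fin 3)) : Prop :=
  LinearIndependent (ZMod 2) (fun s : S => iasCol A s.1)

/-- Circuits of the isotropic matroid: minimal dependent sets. -/
def iasCircuit (A : Matrix V V (ZMod 2)) (C : Set (V × Fin 3)) : Prop :=
  ¬ iasIndep A C ∧ ∀ S ⊂ C, iasIndep A S

/-- An ordinary `k`-separation: `λ(S) < k` and `|S|, |W - S| ≥ k`. -/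
def OrdinarySep (A : Matrix V V (ZMod 2)) (k : ℕ) (S : Set (V × Fin 3)) : Prop :=
  0 < k ∧ iasLambda A S < k ∧ k ≤ S.ncard ∧ k ≤ Sᶜ.ncard

/-- A cyclic `k`-separation: `λ(S) < k` and both `S` and `W - S` are dependent. -/
def CyclicSep (A : Matrix V V (ZMod 2)) (k : ℕ) (S : Set (V × Fin 3)) : Prop :=
  0 < k ∧ iasLambda A S < k ∧ ¬ iasIndep A S ∧ ¬ iasIndep A Sᶜ

/-- A vertical `k`-separation: `λ(S) < k` and `r(S), r(W - S) ≥ k`. -/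
def VerticalSep (A : Matrix V V (ZMod 2)) (k : ℕ) (S : Set (V × Fin 3)) : Prop :=
  0 < k ∧ iasLambda A S < k ∧ k ≤ iasRank A S ∧ k ≤ iasRank A Sᶜ

/-- `τ(M) = min {k : M has an ordinary k-separation}`, with `min ∅ = ∞`. -/
noncomputable def iasTau (A : Matrix V V (ZMod 2)) : ℕ∞ :=
  sInf {k : ℕ∞ | ∃ m : ℕ, (m : ℕ∞) = k ∧ ∃ S, OrdinarySep A m S}

/-- `κ*(M) = min ({k : M has a cyclic k-separation} ∪ {|W| - r(M)})`. -/
noncomputable def iasKappaStar (A : Matrix V V (ZMod 2)) : ℕ :=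
  sInf ({k : ℕ | ∃ S, CyclicSep A k S} ∪ {3 * Fintype.card V - iasRank A Set.univ})

/-- `κ(M) = min ({k : M has a vertical k-separation} ∪ {r(M)})`. -/
noncomputable def iasKappa (A : Matrix V V (ZMod 2)) : ℕ :=
  sInf ({k : ℕ | ∃ S, VerticalSep A k S} ∪ {iasRank A Set.univ})

/-- The simple graph underlying a looped simple graph given by its adjacency matrix. -/
def toSimpleGraph (A : Matrix V V (ZMod 2)) : SimpleGraph V where
  Adj v w := v ≠ w ∧ A v w = 1 ∧ A w v = 1
  symm := ⟨fun v w ⟨h1, h2, h3⟩ => ⟨Ne.symm h1, h3, h2⟩⟩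
  loopless := ⟨fun v h => h.1 rfl⟩

/-- The open neighborhood `N_G(v)`. -/
def nbhd (A : Matrix V V (ZMod 2)) (v : V) : Set V := {u | u ≠ v ∧ A v u = 1}

/-- `v` is a pendant vertex: `N_G(v) = {w}` for some `w`. -/
def IsPendant (A : Matrix V V (ZMod 2)) (v : V) : Prop := ∃ w, nbhd A v = {w}

/-- `G` has a pair of twin vertices: `v ≠ w` with `N_G(v) - {w} = N_G(w) - {v}`. -/
def HasTwins (A : Matrix V V (ZMod 2)) : Prop :=
  ∃ v w, v ≠ w ∧ nbhd A v \ {w} = nbhd A w \ {v}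

/-- The cut-rank `c_G(X)`: the GF(2)-rank of the submatrix `A[V - X, X]`
(columns indexed by `X`, rows indexed by `V - X`). -/
noncomputable def cutRank (A : Matrix V V (ZMod 2)) (X : Set V) : ℕ :=
  Module.finrank (ZMod 2)
    (Submodule.span (ZMod 2) ((fun x : V => fun w : ↥(Xᶜ) => A w.1 x) '' X))

/-- `τ_G(X) = ⋃_{x ∈ X} τ_G(x)`, the union of the vertex triples of members of `X`. -/
def tauSet (X : Set V) : Set (V × Fin 3) := {p | p.1 ∈ X}

/-- Loop complementation at `v`. -/
def loopComp (A : Matrix V V (ZMod 2)) (v : V) : Matrix V V (ZMod 2) :=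
  fun x y => A x y + if x = v ∧ y = v then 1 else 0

/-- Simple local complementation at `v`. -/
def simpleLocalComp (A : Matrix V V (ZMod 2)) (v : V) : Matrix V V (ZMod 2) :=
  fun x y => A x y +
    if x ≠ y ∧ (x ≠ v ∧ A v x = 1) ∧ (y ≠ v ∧ A v y = 1) then 1 else 0

/-- Non-simple local complementation at `v`. -/
def nonSimpleLocalComp (A : Matrix V V (ZMod 2)) (v : V) : Matrix V V (ZMod 2) :=
  fun x y => simpleLocalComp A v x y + if x = y ∧ x ≠ v ∧ A v x = 1 then 1 else 0

/-- One local move. -/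
def LocalStep (A B : Matrix V V (ZMod 2)) : Prop :=
  ∃ v, B = loopComp A v ∨ B = simpleLocalComp A v ∨ B = nonSimpleLocalComp A v

/-- Local equivalence: a finite sequence of loop complementations and
(simple or non-simple) local complementations. -/
def LocallyEquiv (A B : Matrix V V (ZMod 2)) : Prop :=
  Relation.ReflTransGen LocalStep A B

/-- `G` has a split: a bipartition `(V₁, V₂)` of `V` with `|V₁|, |V₂| ≥ 2` such that the
GF(2)-rank of `A[V₁, V₂]` is at most 1. -/
def HasSplit (A : Matrix V V (ZMod 2)) : Prop :=
  ∃ X : Set V, 2 ≤ X.ncard ∧ 2 ≤ Xᶜ.ncard ∧ cutRank A X ≤ 1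

/-- A transverse circuit: a circuit of the isotropic matroid meeting each
vertex triple at most once. -/
def IsTransverseCircuit (A : Matrix V V (ZMod 2)) (C : Set (V × Fin 3)) : Prop :=
  iasCircuit A C ∧ ∀ p ∈ C, ∀ q ∈ C, p.1 = q.1 → p = q

/-- An isotropic `k`-separation of `G`: `|X|, |V - X| ≥ k` and `c_G(X) < k`. -/
def IsotropicSep (A : Matrix V V (ZMod 2)) (k : ℕ) (X : Set V) : Prop :=
  k ≤ X.ncard ∧ k ≤ Xᶜ.ncard ∧ cutRank A X < k

/-- The isotropic connectivity `κ_B(G)`, with `min ∅ = ∞`. -/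
noncomputable def kappaB (A : Matrix V V (ZMod 2)) : ℕ∞ :=
  sInf {j : ℕ∞ | ∃ k : ℕ, (k : ℕ∞) = j ∧ ∃ X, IsotropicSep A k X}

/-- The 5-cycle `C₅`. -/
def C5mat : Matrix (Fin 5) (Fin 5) (ZMod 2) :=
  fun i j => if (i.val + 1) % 5 = j.val ∨ (j.val + 1) % 5 = i.val then 1 else 0

/-- The wheel `W₅` : a 5-cycle on `{0,…,4}` plus a hub `5` adjacent to all. -/
def W5mat : Matrix (Fin 6) (Fin 6) (ZMod 2) :=
  fun i j =>
    if (i.val = 5 ∧ j.val ≠ 5) ∨ (j.val = 5 ∧ i.val ≠ 5) then 1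
    else if i.val ≠ 5 ∧ j.val ≠ 5 ∧ ((i.val + 1) % 5 = j.val ∨ (j.val + 1) % 5 = i.val) then 1
    else 0
/-- `T` admits an ordering `s₁, …, s_m` of its elements with `λ({s₁,…,s_i}) < 3`
for every `i`. -/
def SeqOrdering (A : Matrix V V (ZMod 2)) (T : Set (V × Fin 3)) : Prop :=
  ∃ l : List (V × Fin 3), l.Nodup ∧ {x | x ∈ l} = T ∧
    ∀ i : ℕ, i ≤ l.length → iasLambda A {x | x ∈ l.take i} < 3


section Stmt15Aux

open Submodule Set Module

variable (A : Matrix V V (ZMod 2))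

private lemma zm01 : ∀ a : ZMod 2, a = 0 ∨ a = 1 := by decide

private lemma zmadd : ∀ a : ZMod 2, a + a = 0 := by decide

private lemma fadd (f : V → ZMod 2) : f + f = 0 := by
  funext w; exact zmadd (f w)

private lemma col0 (v : V) : iasCol A (v, 0) = fun w => if w = v then 1 else 0 := by
  funext w; simp [iasCol]

private lemma col1 (v : V) : iasCol A (v, 1) = fun w => A w v := by
  funext w; simp [iasCol]

private lemma col2 (v : V) :
    iasCol A (v, 2) = fun w => A w v + if w = v then 1 else 0 := by
  funext w; simp [iasCol]

private lemma colsum (v : V) : iasCol A (v, 0) + iasCol A (v, 1) = iasCol A (v, 2) := by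
  rw [col0, col1, col2]; funext w
  show (if w = v then (1 : ZMod 2) else 0) + A w v = A w v + _
  exact add_comm _ _

private lemma rank_span_le_ncard (s : Set (V → ZMod 2)) :
    Module.finrank (ZMod 2) (span (ZMod 2) s) ≤ s.ncard := by
  have : Fintype s := (Set.toFinite s).fintype
  rw [Set.ncard_eq_toFinset_card']; exact finrank_span_le_card (R := ZMod 2) s

private lemma iasRank_le_ncard (S : Set (V × Fin 3)) : iasRank A S ≤ S.ncard :=
  le_trans (rank_span_le_ncard _) (Set.ncard_image_le (Set.toFinite S))

private lemma iasRank_mono {S T : Set (V × Fin 3)} (h : S ⊆ T) :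
    iasRank A S ≤ iasRank A T :=
  Submodule.finrank_mono (span_mono (Set.image_mono h))

private lemma mem_of_single {H : Submodule (ZMod 2) (V → ZMod 2)}
    (h : ∀ v, iasCol A (v, 0) ∈ H) : ∀ f : V → ZMod 2, f ∈ H := by
  intro f
  rw [pi_eq_sum_univ f]
  refine Submodule.sum_mem _ fun v _ => Submodule.smul_mem _ _ ?_
  have he : (fun j => if v = j then (1 : ZMod 2) else 0) = iasCol A (v, 0) := by
    rw [col0]; funext w; simp [eq_comm]
  rw [he]; exact h v

private lemma iasRank_univ : iasRank A Set.univ = Fintype.card V := by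
  have htop : span (ZMod 2) (iasCol A '' Set.univ) = ⊤ := by
    rw [eq_top_iff]; intro f _
    exact mem_of_single (H := span (ZMod 2) (iasCol A '' Set.univ)) A
      (fun v => subset_span (Set.mem_image_of_mem _ trivial)) f
  rw [iasRank, htop, finrank_top, Module.finrank_pi]

private lemma iasRank_le_card (S : Set (V × Fin 3)) : iasRank A S ≤ Fintype.card V :=
  (iasRank_mono A (Set.subset_univ S)).trans (iasRank_univ A).le

private lemma iasRank_add_compl (S : Set (V × Fin 3)) :
    Fintype.card V ≤ iasRank A S + iasRank A Sᶜ := by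
  have hsup : span (ZMod 2) (iasCol A '' S) ⊔ span (ZMod 2) (iasCol A '' Sᶜ)
      = span (ZMod 2) (iasCol A '' Set.univ) := by
    rw [← span_union, ← Set.image_union, Set.union_compl_self]
  have h1 := Submodule.finrank_add_le_finrank_add_finrank
    (span (ZMod 2) (iasCol A '' S)) (span (ZMod 2) (iasCol A '' Sᶜ))
  rw [hsup] at h1
  calc Fintype.card V = iasRank A Set.univ := (iasRank_univ A).symm
    _ ≤ _ := h1

private lemma iasLambda_le (S : Set (V × Fin 3)) : iasLambda A S ≤ iasRank A S := by
  have h := iasRank_le_card A Sᶜ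
  have h2 := iasRank_univ A
  simp only [iasLambda]
  omega

private lemma no_sep (h3 : 3 ≤ iasTau A) {k : ℕ} (hk : k ≤ 2) {X : Set (V × Fin 3)}
    (hX : OrdinarySep A k X) : False := by
  have h1 : iasTau A ≤ (k : ℕ∞) := sInf_le ⟨k, rfl, X, hX⟩
  have h2 : ((3 : ℕ) : ℕ∞) ≤ (k : ℕ∞) := le_trans (by exact_mod_cast h3) h1
  have : (3 : ℕ) ≤ k := by exact_mod_cast h2
  omega

private lemma ncard_ground (S : Set (V × Fin 3)) :
    S.ncard + Sᶜ.ncard = 3 * Fintype.card V := by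
  rw [Set.ncard_add_ncard_compl, Nat.card_eq_fintype_card, Fintype.card_prod,
    Fintype.card_fin]
  ring

private lemma rank_pair (h3 : 3 ≤ iasTau A) (hn : 2 ≤ Fintype.card V)
    {x y : V × Fin 3} (hxy : x ≠ y) : iasRank A {x, y} = 2 := by
  have hle : iasRank A {x, y} ≤ 2 :=
    (iasRank_le_ncard A _).trans_eq (Set.ncard_pair hxy)
  rcases Nat.lt_or_ge (iasRank A {x, y}) 2 with h | h
  · exfalso
    refine no_sep A h3 (le_refl 2) (X := {x, y}) ⟨by norm_num, ?_, ?_, ?_⟩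
    · exact lt_of_le_of_lt (iasLambda_le A _) h
    · rw [Set.ncard_pair hxy]
    · have hg := ncard_ground ({x, y} : Set (V × Fin 3))
      rw [Set.ncard_pair hxy] at hg
      omega
  · omega

private lemma col_ne (h3 : 3 ≤ iasTau A) (hn : 2 ≤ Fintype.card V)
    {x y : V × Fin 3} (hxy : x ≠ y) : iasCol A x ≠ iasCol A y := by
  intro he
  have h2 := rank_pair A h3 hn hxy
  have hle : iasRank A {x, y} ≤ 1 := by
    simp only [iasRank]
    rw [Set.image_pair, he, Set.pair_eq_singleton]
    exact le_trans (rank_span_le_ncard _) (le_of_eq (Set.ncard_singleton _))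
  omega

private lemma col_ne_zero (h3 : 3 ≤ iasTau A) (hn : 2 ≤ Fintype.card V)
    (x : V × Fin 3) : iasCol A x ≠ 0 := by
  intro he
  obtain ⟨v, i⟩ := x
  have hii : i ≠ i + 1 := by fin_cases i <;> decide
  have hy : (v, i) ≠ (v, i + 1) := fun h => hii (congrArg Prod.snd h)
  have h2 := rank_pair A h3 hn hy
  have hle : iasRank A {(v, i), (v, i + 1)} ≤ 1 := by
    simp only [iasRank]
    rw [Set.image_pair, he, Submodule.span_insert_zero]
    exact le_trans (rank_span_le_ncard _) (le_of_eq (Set.ncard_singleton _))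
  omega

private lemma col_eq_add (h3 : 3 ≤ iasTau A) (hn : 2 ≤ Fintype.card V)
    {x y z : V × Fin 3} (hxy : x ≠ y) (hxz : x ≠ z) (hyz : y ≠ z)
    (hz : iasCol A z ∈ span (ZMod 2) {iasCol A x, iasCol A y}) :
    iasCol A z = iasCol A x + iasCol A y := by
  rw [Submodule.mem_span_pair] at hz
  obtain ⟨a, b, hab⟩ := hz
  rcases zm01 a with ha | ha <;> rcases zm01 b with hb | hb <;> subst ha <;> subst hb <;>
    simp only [zero_smul, one_smul, zero_add, add_zero] at hab
  · exact absurd hab.symm (col_ne_zero A h3 hn z)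
  · exact absurd hab (col_ne A h3 hn hyz)
  · exact absurd hab (col_ne A h3 hn hxz)
  · exact hab.symm

private lemma coc (hA : A.IsSymm) (h3 : 3 ≤ iasTau A) (hn : 2 ≤ Fintype.card V)
    {H : Submodule (ZMod 2) (V → ZMod 2)}
    (hH : Module.finrank (ZMod 2) H ≤ Fintype.card V - 1)
    (hc : {x : V × Fin 3 | iasCol A x ∉ H}.ncard ≤ 3) : False := by
  set C := {x : V × Fin 3 | iasCol A x ∉ H} with hC
  have htop : (∀ v : V, iasCol A (v, 0) ∈ H) → False := by
    intro hall
    have hteq : H = ⊤ := by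
      rw [eq_top_iff]; intro f _; exact mem_of_single A hall f
    have : Module.finrank (ZMod 2) H = Fintype.card V := by
      rw [hteq, finrank_top, Module.finrank_pi]
    omega
  -- sum of any two distinct columns of a vertex triple is the third
  have hsum3 : ∀ v : V, ∀ i j k : Fin 3, i ≠ j → j ≠ k → i ≠ k →
      iasCol A (v, i) + iasCol A (v, j) = iasCol A (v, k) := by
    intro v i j k hij hjk hik
    have s01 : iasCol A (v, 0) + iasCol A (v, 1) = iasCol A (v, 2) := colsum A v
    have s02 : iasCol A (v, 0) + iasCol A (v, 2) = iasCol A (v, 1) := by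
      rw [← s01, ← add_assoc, fadd, zero_add]
    have s12 : iasCol A (v, 1) + iasCol A (v, 2) = iasCol A (v, 0) := by
      rw [← s01, add_comm (iasCol A (v, 0)), ← add_assoc, fadd, zero_add]
    fin_cases i <;> fin_cases j <;> fin_cases k <;>
      first
      | exact absurd rfl (by assumption)
      | exact s01
      | exact s02
      | exact s12
      | exact (add_comm _ _).trans s01
      | exact (add_comm _ _).trans s02
      | exact (add_comm _ _).trans s12
  have hpair : ∀ v : V, ∀ i j : Fin 3, i ≠ j → iasCol A (v, i) ∈ H →
      iasCol A (v, j) ∈ H → ∀ k : Fin 3, iasCol A (v, k) ∈ H := by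
    intro v i j hij hi hj k
    by_cases hki : k = i
    · subst hki; exact hi
    by_cases hkj : k = j
    · subst hkj; exact hj
    have := hsum3 v i j k hij (fun h => hkj h.symm) (fun h => hki h.symm)
    rw [← this]
    exact H.add_mem hi hj
  by_cases hex : ∃ v : V, ∃ i j : Fin 3, i ≠ j ∧ (v, i) ∈ C ∧ (v, j) ∈ C
  · obtain ⟨v, i, j, hij, hi, hj⟩ := hex
    have hfour : ∀ u : V, u ≠ v → ∀ i' j' : Fin 3, i' ≠ j' →
        ((u, i') ∉ C ∨ (u, j') ∉ C) := by
      intro u hu i' j' hij'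
      by_contra hcon
      push_neg at hcon
      obtain ⟨hi', hj'⟩ := hcon
      have hsub : ({(v, i), (v, j), (u, i'), (u, j')} : Set (V × Fin 3)) ⊆ C := by
        intro p hp
        simp only [Set.mem_insert_iff, Set.mem_singleton_iff] at hp
        rcases hp with rfl | rfl | rfl | rfl <;> assumption
      have hm1 : (v, i) ∉ ({(v, j), (u, i'), (u, j')} : Set (V × Fin 3)) := by
        simp [Prod.ext_iff, hij, Ne.symm hu]
      have hm2 : (v, j) ∉ ({(u, i'), (u, j')} : Set (V × Fin 3)) := by
        simp [Prod.ext_iff, Ne.symm hu]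
      have hm3 : (u, i') ∉ ({(u, j')} : Set (V × Fin 3)) := by
        simp [Prod.ext_iff, hij']
      have h4 : ({(v, i), (v, j), (u, i'), (u, j')} : Set (V × Fin 3)).ncard = 4 := by
        rw [Set.ncard_insert_of_notMem hm1, Set.ncard_insert_of_notMem hm2,
          Set.ncard_insert_of_notMem hm3, Set.ncard_singleton]
      have := Set.ncard_le_ncard hsub (Set.toFinite C)
      omega
    have hEA : ∀ u : V, u ≠ v → ∀ k : Fin 3, iasCol A (u, k) ∈ H := by
      intro u hu
      have h2 : ∃ i' j' : Fin 3, i' ≠ j' ∧ (u, i') ∉ C ∧ (u, j') ∉ C := by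
        by_cases h0 : (u, 0) ∈ C <;> by_cases h1 : (u, 1) ∈ C <;>
          by_cases h2 : (u, 2) ∈ C
        · exact (hfour u hu 0 1 (by decide)).elim (fun h => absurd h0 h)
            (fun h => absurd h1 h)
        · exact (hfour u hu 0 1 (by decide)).elim (fun h => absurd h0 h)
            (fun h => absurd h1 h)
        · exact (hfour u hu 0 2 (by decide)).elim (fun h => absurd h0 h)
            (fun h => absurd h2 h)
        · exact ⟨1, 2, by decide, h1, h2⟩
        · exact (hfour u hu 1 2 (by decide)).elim (fun h => absurd h1 h)
            (fun h => absurd h2 h)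
        · exact ⟨0, 2, by decide, h0, h2⟩
        · exact ⟨0, 1, by decide, h0, h1⟩
        · exact ⟨0, 1, by decide, h0, h1⟩
      obtain ⟨i', j', hij', hni, hnj⟩ := h2
      simp only [hC, Set.mem_setOf_eq, not_not] at hni hnj
      exact hpair u i' j' hij' hni hnj
    have hnb : ∃ u0, u0 ≠ v ∧ A u0 v = 1 := by
      by_contra hno
      push_neg at hno
      have hcol : iasCol A (v, 1) = A v v • iasCol A (v, 0) := by
        rw [col0, col1]; funext w
        by_cases hw : w = v
        · subst hw; simp
        · have h0 : A w v = 0 := by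
            rcases zm01 (A w v) with h | h
            · exact h
            · exact absurd h (hno w hw)
          simp [hw, h0]
      have h01 : (0 : Fin 3) ≠ 1 := by decide
      have hne01 : ((v, 0) : V × Fin 3) ≠ (v, 1) := fun h => h01 (congrArg Prod.snd h)
      have hr := rank_pair A h3 hn hne01
      have hle : iasRank A {(v, 0), (v, 1)} ≤ 1 := by
        simp only [iasRank]
        rw [Set.image_pair]
        have hle2 : span (ZMod 2) {iasCol A (v, 0), iasCol A (v, 1)}
            ≤ span (ZMod 2) {iasCol A (v, 0)} := by
          apply span_le.mpr
          rintro f hf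
          rcases hf with rfl | hf
          · exact subset_span rfl
          · rw [Set.mem_singleton_iff] at hf
            subst hf
            rw [hcol]
            exact Submodule.smul_mem _ _ (subset_span rfl)
        exact le_trans (Submodule.finrank_mono hle2)
          (le_trans (rank_span_le_ncard _) (le_of_eq (Set.ncard_singleton _)))
      omega
    obtain ⟨u0, hu0, hadj⟩ := hnb
    have hadj' : A v u0 = 1 := (hA.apply v u0).symm.symm ▸ hadj
    have hev : iasCol A (v, 0) ∈ H := by
      have heq : iasCol A (v, 0)
          = iasCol A (u0, 1) + ∑ u ∈ Finset.univ.erase v, A u u0 • iasCol A (u, 0) := by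
        funext w
        simp only [Pi.add_apply, Finset.sum_apply, Pi.smul_apply, col0, col1,
          smul_eq_mul, mul_ite, mul_one, mul_zero]
        rw [Finset.sum_ite_eq]
        by_cases hw : w = v
        · subst hw
          rw [if_pos rfl, if_neg (by simp), add_zero, hadj']
        · rw [if_neg hw, if_pos (Finset.mem_erase.mpr ⟨hw, Finset.mem_univ _⟩)]
          exact (zmadd _).symm
      rw [heq]
      refine H.add_mem (hEA u0 hu0 1) (Submodule.sum_mem _ fun u hu => ?_)
      exact Submodule.smul_mem _ _ (hEA u (Finset.ne_of_mem_erase hu) 0)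
    refine htop fun u => ?_
    by_cases h : u = v
    · subst h; exact hev
    · exact hEA u h 0
  · push_neg at hex
    refine htop fun v => ?_
    by_cases h0 : (v, 0) ∈ C
    · have h1 : (v, 1) ∉ C := hex v 0 1 (by decide) h0
      have h2 : (v, 2) ∉ C := hex v 0 2 (by decide) h0
      simp only [hC, Set.mem_setOf_eq, not_not] at h1 h2
      exact hpair v 1 2 (by decide) h1 h2 0
    · simp only [hC, Set.mem_setOf_eq, not_not] at h0
      exact h0

private lemma nosq (hA : A.IsSymm) (h3 : 3 ≤ iasTau A) (hn : 2 ≤ Fintype.card V)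
    {T : Set (V × Fin 3)} (hseq : SeqOrdering A T) (h4 : 4 ≤ T.ncard) : False := by
  obtain ⟨l, hnd, hlT, hpre⟩ := hseq
  have hlen : T.ncard = l.length := by
    rw [← hlT, ← List.coe_toFinset, Set.ncard_coe_finset,
      List.toFinset_card_of_nodup hnd]
  rcases l with _ | ⟨a, l1⟩
  · simp only [List.length_nil] at hlen; omega
  rcases l1 with _ | ⟨b, l2⟩
  · simp only [List.length_cons, List.length_nil] at hlen; omega
  rcases l2 with _ | ⟨c, l3⟩
  · simp only [List.length_cons, List.length_nil] at hlen; omega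
  rcases l3 with _ | ⟨d, rest⟩
  · simp only [List.length_cons, List.length_nil] at hlen; omega
  simp only [List.nodup_cons, List.mem_cons, not_or] at hnd
  obtain ⟨⟨hab, hac, had, -⟩, ⟨hbc, hbd, -⟩, ⟨hcd, -⟩, -⟩ := hnd
  -- prefix lambda facts
  have htake3 : (a :: b :: c :: d :: rest).take 3 = [a, b, c] := rfl
  have htake4 : (a :: b :: c :: d :: rest).take 4 = [a, b, c, d] := rfl
  have hset3 : {x : V × Fin 3 | x ∈ [a, b, c]} = ({a, b, c} : Set (V × Fin 3)) := by
    ext p; simp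
  have hset4 : {x : V × Fin 3 | x ∈ [a, b, c, d]}
      = ({a, b, c, d} : Set (V × Fin 3)) := by
    ext p; simp
  have hL3 : iasLambda A ({a, b, c} : Set (V × Fin 3)) < 3 := by
    have h := hpre 3 (by simp only [List.length_cons]; omega)
    rw [htake3, hset3] at h
    exact h
  have hL4 : iasLambda A ({a, b, c, d} : Set (V × Fin 3)) < 3 := by
    have h := hpre 4 (by simp only [List.length_cons]; omega)
    rw [htake4, hset4] at h
    exact h
  have hsub23 : ({a, b} : Set (V × Fin 3)) ⊆ {a, b, c} := by
    intro x hx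
    simp only [Set.mem_insert_iff, Set.mem_singleton_iff] at hx ⊢
    tauto
  have hsub24 : ({a, b} : Set (V × Fin 3)) ⊆ {a, b, c, d} := by
    intro x hx
    simp only [Set.mem_insert_iff, Set.mem_singleton_iff] at hx ⊢
    tauto
  have hn3 : ({a, b, c} : Set (V × Fin 3)).ncard = 3 := by
    rw [Set.ncard_insert_of_notMem (by simp [hab, hac]), Set.ncard_pair hbc]
  have hn4 : ({a, b, c, d} : Set (V × Fin 3)).ncard = 4 := by
    rw [Set.ncard_insert_of_notMem (by simp [hab, hac, had]),
      Set.ncard_insert_of_notMem (by simp [hbc, hbd]), Set.ncard_pair hcd]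
  have hr2 : iasRank A ({a, b} : Set (V × Fin 3)) = 2 := rank_pair A h3 hn hab
  -- rank of the first three is 2
  have hr3 : iasRank A ({a, b, c} : Set (V × Fin 3)) = 2 := by
    have hge : 2 ≤ iasRank A ({a, b, c} : Set (V × Fin 3)) :=
      hr2 ▸ iasRank_mono A hsub23
    have hle : iasRank A ({a, b, c} : Set (V × Fin 3)) ≤ 3 :=
      (iasRank_le_ncard A _).trans_eq hn3
    by_contra hne
    have h33 : iasRank A ({a, b, c} : Set (V × Fin 3)) = 3 := by omega
    have hcompl : iasRank A (({a, b, c} : Set (V × Fin 3))ᶜ) ≤ Fintype.card V - 1 := by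
      have h1 := hL3
      simp only [iasLambda, iasRank_univ] at h1
      have h2 := iasRank_add_compl A ({a, b, c} : Set (V × Fin 3))
      omega
    refine coc A hA h3 hn (H := span (ZMod 2) (iasCol A '' (({a, b, c}
      : Set (V × Fin 3))ᶜ))) hcompl ?_
    have hsub : {x : V × Fin 3 |
        iasCol A x ∉ span (ZMod 2) (iasCol A '' (({a, b, c} : Set (V × Fin 3))ᶜ))}
        ⊆ ({a, b, c} : Set (V × Fin 3)) := by
      intro x hx
      by_contra hxn
      exact hx (subset_span (Set.mem_image_of_mem _ hxn))
    exact le_trans (Set.ncard_le_ncard hsub (Set.toFinite _)) hn3.le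
  have hspan3 : span (ZMod 2) (iasCol A '' ({a, b} : Set (V × Fin 3)))
      = span (ZMod 2) (iasCol A '' ({a, b, c} : Set (V × Fin 3))) := by
    refine Submodule.eq_of_le_of_finrank_le (span_mono (Set.image_mono hsub23)) ?_
    exact le_of_eq (hr3.trans hr2.symm)
  have hcc : iasCol A c = iasCol A a + iasCol A b := by
    refine col_eq_add A h3 hn hab hac hbc ?_
    have hm : iasCol A c ∈ span (ZMod 2) (iasCol A '' ({a, b, c} : Set (V × Fin 3))) :=
      subset_span (Set.mem_image_of_mem _ (by simp))
    rw [← hspan3, Set.image_pair] at hm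
    exact hm
  -- rank of the first four is 3
  have hX4 : ({a, b, c, d} : Set (V × Fin 3)) = insert d ({a, b, c} : Set (V × Fin 3)) := by
    ext x
    simp only [Set.mem_insert_iff, Set.mem_singleton_iff]
    tauto
  have hr4le : iasRank A ({a, b, c, d} : Set (V × Fin 3)) ≤ 3 := by
    simp only [iasRank]
    rw [hX4, Set.image_insert_eq, Submodule.span_insert]
    refine le_trans (Submodule.finrank_add_le_finrank_add_finrank _ _) ?_
    have h1 : Module.finrank (ZMod 2) (span (ZMod 2) {iasCol A d}) ≤ 1 :=
      le_trans (rank_span_le_ncard _) (le_of_eq (Set.ncard_singleton _))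
    have h2 : Module.finrank (ZMod 2)
        (span (ZMod 2) (iasCol A '' ({a, b, c} : Set (V × Fin 3)))) = 2 := hr3
    omega
  have hr4 : iasRank A ({a, b, c, d} : Set (V × Fin 3)) = 3 := by
    by_contra hne
    have hge : 2 ≤ iasRank A ({a, b, c, d} : Set (V × Fin 3)) :=
      hr2 ▸ iasRank_mono A hsub24
    have h2 : iasRank A ({a, b, c, d} : Set (V × Fin 3)) ≤ 2 := by omega
    have hsp : span (ZMod 2) (iasCol A '' ({a, b} : Set (V × Fin 3)))
        = span (ZMod 2) (iasCol A '' ({a, b, c, d} : Set (V × Fin 3))) := by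
      refine Submodule.eq_of_le_of_finrank_le (span_mono (Set.image_mono hsub24)) ?_
      exact le_trans h2 (le_of_eq hr2.symm)
    have hd : iasCol A d = iasCol A a + iasCol A b := by
      refine col_eq_add A h3 hn hab had hbd ?_
      have hm : iasCol A d
          ∈ span (ZMod 2) (iasCol A '' ({a, b, c, d} : Set (V × Fin 3))) :=
        subset_span (Set.mem_image_of_mem _ (by simp))
      rw [← hsp, Set.image_pair] at hm
      exact hm
    exact col_ne A h3 hn hcd (hcc.trans hd.symm)
  -- lambda of first four is at least 2
  have hL4ge : 2 ≤ iasLambda A ({a, b, c, d} : Set (V × Fin 3)) := by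
    by_contra hcon
    push_neg at hcon
    have hg := ncard_ground ({a, b, c, d} : Set (V × Fin 3))
    refine no_sep A h3 (le_refl 2) (X := ({a, b, c, d} : Set (V × Fin 3)))
      ⟨by norm_num, hcon, by rw [hn4]; norm_num, by omega⟩
  have hcompl4 : iasRank A (({a, b, c, d} : Set (V × Fin 3))ᶜ) = Fintype.card V - 1 := by
    have h1 := iasRank_add_compl A ({a, b, c, d} : Set (V × Fin 3))
    have h2 := iasRank_le_card A (({a, b, c, d} : Set (V × Fin 3))ᶜ)
    have h5 := hL4
    have h6 := hL4ge
    simp only [iasLambda, iasRank_univ] at h5 h6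
    omega
  set H4 := span (ZMod 2) (iasCol A '' (({a, b, c, d} : Set (V × Fin 3))ᶜ)) with hH4
  have hfH4 : Module.finrank (ZMod 2) H4 = Fintype.card V - 1 := hcompl4
  have hone : ∃ t ∈ ({a, b, c, d} : Set (V × Fin 3)), iasCol A t ∈ H4 := by
    by_contra hcon
    push_neg at hcon
    have hna := hcon a (by simp)
    have hnb := hcon b (by simp)
    have hnc := hcon c (by simp)
    have hfq : Module.finrank (ZMod 2) ((V → ZMod 2) ⧸ H4) = 1 := by
      have hq := Submodule.finrank_quotient_add_finrank H4
      rw [Module.finrank_pi] at hq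
      omega
    have hqa : Submodule.Quotient.mk (p := H4) (iasCol A a) ≠ 0 := by
      simpa only [ne_eq, Submodule.Quotient.mk_eq_zero] using hna
    have hqb : Submodule.Quotient.mk (p := H4) (iasCol A b) ≠ 0 := by
      simpa only [ne_eq, Submodule.Quotient.mk_eq_zero] using hnb
    have hspan1 : span (ZMod 2) {Submodule.Quotient.mk (p := H4) (iasCol A a)} = ⊤ :=
      Submodule.eq_top_of_finrank_eq (by rw [finrank_span_singleton hqa, hfq])
    have hmb : Submodule.Quotient.mk (p := H4) (iasCol A b)
        ∈ span (ZMod 2) {Submodule.Quotient.mk (p := H4) (iasCol A a)} := by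
      rw [hspan1]; exact Submodule.mem_top
    rw [Submodule.mem_span_singleton] at hmb
    obtain ⟨α, hα⟩ := hmb
    rcases zm01 α with h | h <;> subst h
    · rw [zero_smul] at hα
      exact hqb hα.symm
    · rw [one_smul] at hα
      have hzc : Submodule.Quotient.mk (p := H4) (iasCol A c) = 0 := by
        rw [hcc, Submodule.Quotient.mk_add, ← hα]
        rw [← two_smul (ZMod 2), (by decide : (2 : ZMod 2) = 0), zero_smul]
      simp only [Submodule.Quotient.mk_eq_zero] at hzc
      exact hnc hzc
  obtain ⟨t, htmem, htH⟩ := hone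
  have hCsub : {x : V × Fin 3 | iasCol A x ∉ H4}
      ⊆ ({a, b, c, d} : Set (V × Fin 3)) \ {t} := by
    intro x hx
    constructor
    · by_contra hxn
      exact hx (subset_span (Set.mem_image_of_mem _ hxn))
    · intro hxt
      rw [Set.mem_singleton_iff] at hxt
      subst hxt
      exact hx htH
  refine coc A hA h3 hn (le_of_eq hfH4) ?_
  refine le_trans (Set.ncard_le_ncard hCsub (Set.toFinite _)) ?_
  rw [Set.ncard_diff_singleton_of_mem htmem, hn4]

private lemma lambda_le_ncard (S : Set (V × Fin 3)) : iasLambda A S ≤ S.ncard :=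
  le_trans (iasLambda_le A S) (iasRank_le_ncard A S)

private lemma seq_of_three (T : Set (V × Fin 3)) (hT : T.ncard = 3)
    (hL : iasLambda A T < 3) : SeqOrdering A T := by
  obtain ⟨x, y, z, hxy, hxz, hyz, rfl⟩ := Set.ncard_eq_three.mp hT
  refine ⟨[x, y, z], by simp [hxy, hxz, hyz], by ext p; simp, ?_⟩
  intro i hi
  simp only [List.length_cons, List.length_nil] at hi
  interval_cases i
  · have h0 : {p : V × Fin 3 | p ∈ ([x, y, z].take 0)} = (∅ : Set (V × Fin 3)) := by
      ext p; simp
    rw [h0]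
    calc iasLambda A (∅ : Set (V × Fin 3)) ≤ (∅ : Set (V × Fin 3)).ncard :=
          lambda_le_ncard A _
      _ < 3 := by simp
  · have h1 : {p : V × Fin 3 | p ∈ ([x, y, z].take 1)} = ({x} : Set (V × Fin 3)) := by
      ext p; simp
    rw [h1]
    calc iasLambda A ({x} : Set (V × Fin 3)) ≤ ({x} : Set (V × Fin 3)).ncard :=
          lambda_le_ncard A _
      _ < 3 := by simp [Set.ncard_singleton]
  · have h2 : {p : V × Fin 3 | p ∈ ([x, y, z].take 2)} = ({x, y} : Set (V × Fin 3)) := by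
      ext p; simp
    rw [h2]
    calc iasLambda A ({x, y} : Set (V × Fin 3)) ≤ ({x, y} : Set (V × Fin 3)).ncard :=
          lambda_le_ncard A _
      _ < 3 := by rw [Set.ncard_pair hxy]; norm_num
  · have h3' : {p : V × Fin 3 | p ∈ ([x, y, z].take 3)}
        = ({x, y, z} : Set (V × Fin 3)) := by
      ext p; simp
    rw [h3']
    exact hL

private lemma lambda_compl (S : Set (V × Fin 3)) : iasLambda A Sᶜ = iasLambda A S := by
  simp only [iasLambda, compl_compl]
  rw [Nat.add_comm]

end Stmt15Aux

theorem stmt15 (A : Matrix V V (ZMod 2)) (hA : A.IsSymm) (h3 : 3 ≤ iasTau A)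
    (S : Set (V × Fin 3)) (hS : OrdinarySep A 3 S) :
    (SeqOrdering A S ∨ SeqOrdering A Sᶜ) ↔ (S.ncard = 3 ∨ Sᶜ.ncard = 3) := by
  obtain ⟨-, hL, hS3, hSc3⟩ := hS
  have hgr := ncard_ground S
  have hn : 2 ≤ Fintype.card V := by omega
  constructor
  · rintro (h | h)
    · left
      by_contra hne
      exact nosq A hA h3 hn h (by omega)
    · right
      by_contra hne
      exact nosq A hA h3 hn h (by omega)
  · rintro (h | h)
    · exact Or.inl (seq_of_three A S h hL)
    · refine Or.inr (seq_of_three A Sᶜ h ?_)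
      rw [lambda_compl]
      exact hL
end

section
/- Let G be a graph with n ≥ 1 vertices, let M = M[IAS(G)], and let q be the cardinality of the smallest transverse circuit of G. If q < (n+1)/2, then 2q − 1 ≥ κ(M). -/
open scoped ENat

variable {V : Type*} [Fintype V] [DecidableEq V]

open Module Submodule Matrix

section AuxGen
variable {K M N : Type*} [Field K] [AddCommGroup M] [Module K M] [AddCommGroup N] [Module K N]

lemma aux_finrank_eq_map_add_inf_ker [FiniteDimensional K M] (p : Submodule K M)
    (f : M →ₗ[K] N) :
    finrank K p = finrank K (p.map f) + finrank K ↥(p ⊓ LinearMap.ker f) := by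
  have h := LinearMap.finrank_range_add_finrank_ker (f.comp p.subtype)
  rw [LinearMap.range_comp, Submodule.range_subtype] at h
  have h2 : finrank K ↥(LinearMap.ker (f.comp p.subtype)) = finrank K ↥(p ⊓ LinearMap.ker f) := by
    rw [LinearMap.ker_comp, ← Submodule.map_comap_subtype]
    exact (Submodule.equivMapOfInjective p.subtype p.injective_subtype _).finrank_eq
  omega

end AuxGen

lemma aux_iasRank_tauSet (A : Matrix V V (ZMod 2)) (X : Set V) :
    iasRank A (tauSet X) = X.ncard + cutRank A X := by
  classical
  haveI : Fintype ↥X := Fintype.ofFinite _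
  haveI : Fintype ↥(Xᶜ) := Fintype.ofFinite _
  set π : (V → ZMod 2) →ₗ[ZMod 2] (↥(Xᶜ) → ZMod 2) :=
    LinearMap.funLeft (ZMod 2) (ZMod 2) (Subtype.val : ↥(Xᶜ) → V) with hπ
  set ρ : (V → ZMod 2) →ₗ[ZMod 2] (↥X → ZMod 2) :=
    LinearMap.funLeft (ZMod 2) (ZMod 2) (Subtype.val : ↥X → V) with hρ
  set p : Submodule (ZMod 2) (V → ZMod 2) := Submodule.span (ZMod 2) (iasCol A '' tauSet X)
    with hp
  have hcardX : Fintype.card ↥X = X.ncard := by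
    rw [← Nat.card_coe_set_eq, Nat.card_eq_fintype_card]
  -- the image under π is the span of the cut columns
  have hmap : p.map π = Submodule.span (ZMod 2)
      ((fun x : V => fun w : ↥(Xᶜ) => A w.1 x) '' X) := by
    rw [hp, Submodule.map_span]
    apply le_antisymm
    · rw [Submodule.span_le]
      rintro - ⟨-, ⟨⟨v, i⟩, hv, rfl⟩, rfl⟩
      have hv' : v ∈ X := hv
      by_cases hi : i = 0
      · have : π (iasCol A ((v, i) : V × Fin 3)) = 0 := by
          funext w
          have hw : (w : V) ≠ v := fun h => w.2 (h ▸ hv')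
          simp [hπ, iasCol, LinearMap.funLeft_apply, hi, hw]
        rw [this]; exact Submodule.zero_mem _
      · have : π (iasCol A ((v, i) : V × Fin 3)) = fun w : ↥(Xᶜ) => A w.1 v := by
          funext w
          have hw : (w : V) ≠ v := fun h => w.2 (h ▸ hv')
          by_cases hi1 : i = 1 <;>
            simp [hπ, iasCol, LinearMap.funLeft_apply, hi, hi1, hw]
        rw [this]
        exact Submodule.subset_span ⟨v, hv', rfl⟩
    · rw [Submodule.span_le]
      rintro - ⟨v, hv, rfl⟩
      apply Submodule.subset_span
      refine ⟨iasCol A (v, 1), ⟨(v, 1), hv, rfl⟩, ?_⟩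
      funext w
      simp [hπ, iasCol, LinearMap.funLeft_apply]
  -- the kernel part has dimension exactly `X.ncard`
  have hker : finrank (ZMod 2) ↥(p ⊓ LinearMap.ker π) = X.ncard := by
    apply le_antisymm
    · -- restriction to X is injective on ker π
      have h1 := aux_finrank_eq_map_add_inf_ker (p ⊓ LinearMap.ker π) ρ
      have h2 : (p ⊓ LinearMap.ker π) ⊓ LinearMap.ker ρ = ⊥ := by
        rw [eq_bot_iff]
        rintro f ⟨⟨-, hfπ⟩, hfρ⟩
        have hfπ' : π f = 0 := hfπ
        have hfρ' : ρ f = 0 := hfρ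
        ext v
        by_cases hv : v ∈ X
        · exact congrFun hfρ' ⟨v, hv⟩
        · exact congrFun hfπ' ⟨v, hv⟩
      rw [h2] at h1
      simp only [finrank_bot, add_zero] at h1
      rw [h1, ← hcardX]
      exact (Submodule.finrank_le _).trans (Module.finrank_fintype_fun_eq_card _).le
    · -- contains the span of the standard basis vectors of X
      have hE : Submodule.span (ZMod 2) ((fun v : V => Pi.single v (1 : ZMod 2)) '' X)
          ≤ p ⊓ LinearMap.ker π := by
        rw [Submodule.span_le]
        rintro - ⟨v, hv, rfl⟩
        constructor
        · apply Submodule.subset_span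
          refine ⟨(v, 0), hv, ?_⟩
          funext w
          simp [iasCol, Pi.single_apply]
        · simp only [SetLike.mem_coe, LinearMap.mem_ker]
          funext w
          have hw : (w : V) ≠ v := fun h => w.2 (h ▸ hv)
          simp [hπ, LinearMap.funLeft_apply, Pi.single_apply, hw]
      have hEeq : finrank (ZMod 2)
          ↥(Submodule.span (ZMod 2) ((fun v : V => Pi.single v (1 : ZMod 2)) '' X)) = X.ncard := by
        rw [Set.image_eq_range, ← hcardX]
        have hli : LinearIndependent (ZMod 2) (fun x : ↥X => (Pi.single (x : V) (1 : ZMod 2) : V → ZMod 2)) := by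
          have := (Pi.basisFun (ZMod 2) V).linearIndependent.comp
            (Subtype.val : ↥X → V) Subtype.val_injective
          convert this using 1
          funext x
          simp [Pi.basisFun_apply]
        exact finrank_span_eq_card hli
      rw [← hEeq]
      exact Submodule.finrank_mono hE
  have := aux_finrank_eq_map_add_inf_ker p π
  rw [hmap, hker] at this
  rw [iasRank, ← hp, this, cutRank]
  ring

lemma aux_iasRank_univ (A : Matrix V V (ZMod 2)) : iasRank A Set.univ = Fintype.card V := by
  have htop : Submodule.span (ZMod 2) (iasCol A '' Set.univ) = ⊤ := by
    rw [eq_top_iff, ← (Pi.basisFun (ZMod 2) V).span_eq, Submodule.span_le]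
    rintro - ⟨v, rfl⟩
    apply Submodule.subset_span
    refine ⟨((v, 0) : V × Fin 3), trivial, ?_⟩
    funext w
    simp [iasCol, Pi.basisFun_apply, Pi.single_apply]
  rw [iasRank, htop, finrank_top, Module.finrank_fintype_fun_eq_card]

open scoped Classical in
noncomputable def padMat (A : Matrix V V (ZMod 2)) (Y : Set V) : Matrix V V (ZMod 2) :=
  Matrix.of fun v x => if v ∈ Yᶜ ∧ x ∈ Y then A v x else 0

lemma aux_cutRank_eq_rank (A : Matrix V V (ZMod 2)) (Y : Set V) :
    cutRank A Y = (padMat A Y).rank := by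
  classical
  let ι : (↥(Yᶜ) → ZMod 2) →ₗ[ZMod 2] (V → ZMod 2) :=
    { toFun := fun f v => if h : v ∈ Yᶜ then f ⟨v, h⟩ else 0
      map_add' := by
        intro f g; funext v
        by_cases h : v ∈ Yᶜ
        · simp only [Pi.add_apply, dif_pos h]
        · simp only [Pi.add_apply, dif_neg h, add_zero]
      map_smul' := by
        intro m f; funext v
        by_cases h : v ∈ Yᶜ
        · simp only [Pi.smul_apply, dif_pos h, RingHom.id_apply]
        · simp only [Pi.smul_apply, dif_neg h, smul_zero, RingHom.id_apply] }
  have hιap : ∀ (f : ↥(Yᶜ) → ZMod 2) (v : V), ι f v = if h : v ∈ Yᶜ then f ⟨v, h⟩ else 0 :=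
    fun f v => rfl
  have hpadT : ∀ x v : V, (padMat A Y)ᵀ x v = if v ∈ Yᶜ ∧ x ∈ Y then A v x else 0 :=
    fun x v => by simp [padMat]
  have hι : Function.Injective ι := by
    intro f g hfg
    funext w
    have h := congrFun hfg w.1
    rw [hιap, hιap] at h
    simpa only [dif_pos w.2, Subtype.coe_eta] using h
  have key : Submodule.map ι
      (Submodule.span (ZMod 2) ((fun x : V => fun w : ↥(Yᶜ) => A w.1 x) '' Y))
      = Submodule.span (ZMod 2) (Set.range (padMat A Y)ᵀ) := by
    rw [Submodule.map_span]
    apply le_antisymm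
    · rw [Submodule.span_le]
      rintro - ⟨-, ⟨x, hx, rfl⟩, rfl⟩
      apply Submodule.subset_span
      refine ⟨x, ?_⟩
      funext v
      rw [hpadT, hιap]
      by_cases h : v ∈ Yᶜ
      · rw [dif_pos h, if_pos ⟨h, hx⟩]
      · rw [dif_neg h, if_neg (fun hc => h hc.1)]
    · rw [Submodule.span_le]
      rintro - ⟨x, rfl⟩
      by_cases hx : x ∈ Y
      · apply Submodule.subset_span
        refine ⟨fun w : ↥(Yᶜ) => A w.1 x, ⟨x, hx, rfl⟩, ?_⟩
        funext v
        rw [hpadT, hιap]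
        by_cases h : v ∈ Yᶜ
        · rw [dif_pos h, if_pos ⟨h, hx⟩]
        · rw [dif_neg h, if_neg (fun hc => h hc.1)]
      · have hz : (padMat A Y)ᵀ x = 0 := by
          funext v
          rw [hpadT, if_neg (fun hc => hx hc.2)]
          rfl
        rw [hz]
        exact Submodule.zero_mem _
  rw [cutRank, Matrix.rank_eq_finrank_span_cols,
    show Set.range (padMat A Y).col = Set.range (padMat A Y)ᵀ from rfl, ← key]
  exact (Submodule.equivMapOfInjective ι hι _).finrank_eq

lemma aux_cutRank_compl (A : Matrix V V (ZMod 2)) (hA : A.IsSymm) (X : Set V) :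
    cutRank A Xᶜ = cutRank A X := by
  classical
  rw [aux_cutRank_eq_rank A X, aux_cutRank_eq_rank A Xᶜ]
  have hQP : padMat A Xᶜ = (padMat A X)ᵀ := by
    ext v x
    simp only [padMat, compl_compl, Matrix.transpose_apply, Matrix.of_apply]
    split_ifs with h1 h2 h2
    · exact hA.apply x v
    · exact absurd ⟨h1.2, h1.1⟩ h2
    · exact absurd ⟨h2.2, h2.1⟩ h1
    · rfl
  rw [hQP, Matrix.rank_transpose]

theorem stmt16 (A : Matrix V V (ZMod 2)) (hA : A.IsSymm) (hn : 1 ≤ Fintype.card V)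
    (q : ℕ) (hq : IsLeast {m : ℕ | ∃ C, IsTransverseCircuit A C ∧ C.ncard = m} q)
    (hlt : 2 * q < Fintype.card V + 1) :
    iasKappa A ≤ 2 * q - 1 := by
  classical
  obtain ⟨⟨C, hC, hCq⟩, -⟩ := hq
  obtain ⟨⟨hCdep, -⟩, htr⟩ := hC
  set X : Set V := Prod.fst '' C with hX
  have hInj : Set.InjOn Prod.fst C := fun p hp p' hp' h => htr p hp p' hp' h
  have hXq : X.ncard = q := by rw [hX, Set.ncard_image_of_injOn hInj, hCq]
  haveI : Fintype ↥X := Fintype.ofFinite _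
  haveI : Fintype ↥(Xᶜ) := Fintype.ofFinite _
  haveI : Fintype ↥C := Fintype.ofFinite _
  have hq1 : 1 ≤ q := by
    rcases Set.eq_empty_or_nonempty C with h | h
    · exfalso
      apply hCdep
      subst h
      haveI : IsEmpty ↥(∅ : Set (V × Fin 3)) := ⟨fun x => x.2⟩
      exact linearIndependent_empty_type
    · have := (Set.ncard_pos C.toFinite).2 h
      omega
  -- extract a dependence among the columns of C
  have hnli : ¬ LinearIndependent (ZMod 2) (fun s : ↥C => iasCol A s.1) := hCdep
  rw [Fintype.not_linearIndependent_iff] at hnli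
  obtain ⟨l, hl0, p₀, hp₀⟩ := hnli
  set c := cutRank A X with hc
  -- the cut columns, as a family indexed by X
  set g : ↥X → (↥(Xᶜ) → ZMod 2) := fun x => fun w => A w.1 x.1 with hg
  have hgspan : cutRank A X
      = Module.finrank (ZMod 2) (Submodule.span (ZMod 2) (Set.range g)) := by
    rw [cutRank, Set.image_eq_range]
  have hqcard : Fintype.card ↥X = q := by
    rw [← Nat.card_coe_set_eq, Nat.card_eq_fintype_card] at hXq
    exact hXq
  -- the family g is linearly dependent
  have hgdep : ¬ LinearIndependent (ZMod 2) g := by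
    rw [Fintype.not_linearIndependent_iff]
    by_cases hcase : ∃ s : ↥C, l s ≠ 0 ∧ (s : V × Fin 3).2 ≠ 0
    · obtain ⟨s₀, hs₀l, hs₀2⟩ := hcase
      have hx₀mem : (s₀ : V × Fin 3).1 ∈ X := ⟨s₀.1, s₀.2, rfl⟩
      set x₀ : ↥X := ⟨(s₀ : V × Fin 3).1, hx₀mem⟩ with hx₀
      set μ : ↥X → ZMod 2 := fun x =>
        ∑ s : ↥C, if (s : V × Fin 3).1 = (x : V) ∧ (s : V × Fin 3).2 ≠ 0 then l s else 0
        with hμ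
      refine ⟨μ, ?_, x₀, ?_⟩
      · -- ∑ x, μ x • g x = 0
        funext w
        have hW : ∀ s : ↥C, l s * iasCol A (s : V × Fin 3) w.1
            = if (s : V × Fin 3).2 ≠ 0 then l s * A w.1 (s : V × Fin 3).1 else 0 := by
          intro s
          have hwx : (w : V) ≠ (s : V × Fin 3).1 := by
            intro h
            exact w.2 (h ▸ (⟨s.1, s.2, rfl⟩ : (s : V × Fin 3).1 ∈ X))
          by_cases h2 : (s : V × Fin 3).2 = 0
          · simp [iasCol, h2, hwx]
          · by_cases h1 : (s : V × Fin 3).2 = 1 <;> simp [iasCol, h2, h1, hwx]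
        have hsum0 : ∑ s : ↥C, l s * iasCol A (s : V × Fin 3) w.1 = 0 := by
          have := congrFun hl0 w.1
          simpa [Finset.sum_apply] using this
        calc (∑ x : ↥X, μ x • g x) w
            = ∑ x : ↥X, ∑ s : ↥C,
              (if (s : V × Fin 3).1 = (x : V) ∧ (s : V × Fin 3).2 ≠ 0
                then l s * A w.1 (x : V) else 0) := by
              simp only [Finset.sum_apply, Pi.smul_apply, smul_eq_mul, hμ, hg,
                Finset.sum_mul, ite_mul, zero_mul]
          _ = ∑ s : ↥C, ∑ x : ↥X,
              (if (s : V × Fin 3).1 = (x : V) ∧ (s : V × Fin 3).2 ≠ 0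
                then l s * A w.1 (x : V) else 0) := Finset.sum_comm
          _ = ∑ s : ↥C, (if (s : V × Fin 3).2 ≠ 0
                then l s * A w.1 (s : V × Fin 3).1 else 0) := by
              apply Finset.sum_congr rfl
              intro s _
              have hsx : (s : V × Fin 3).1 ∈ X := ⟨s.1, s.2, rfl⟩
              rw [Finset.sum_eq_single (⟨(s : V × Fin 3).1, hsx⟩ : ↥X)]
              · by_cases h2 : (s : V × Fin 3).2 ≠ 0 <;> simp [h2]
              · intro x _ hxne
                rw [if_neg]
                rintro ⟨h1, -⟩
                exact hxne (Subtype.ext h1.symm)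
              · intro hmem
                exact absurd (Finset.mem_univ _) hmem
          _ = ∑ s : ↥C, l s * iasCol A (s : V × Fin 3) w.1 := by
              apply Finset.sum_congr rfl
              intro s _
              rw [hW s]
          _ = 0 := hsum0
      · -- μ x₀ ≠ 0
        have : μ x₀ = l s₀ := by
          simp only [hμ]
          rw [Finset.sum_eq_single s₀]
          · rw [if_pos ⟨rfl, hs₀2⟩]
          · intro s _ hsne
            rw [if_neg]
            rintro ⟨h1, -⟩
            exact hsne (Subtype.ext (htr _ s.2 _ s₀.2 h1))
          · intro hmem
            exact absurd (Finset.mem_univ _) hmem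
        rw [this]
        exact hs₀l
    · -- impossible: the relation would be among standard basis vectors only
      exfalso
      push_neg at hcase
      have hsum : ∑ s : ↥C, l s * iasCol A (s : V × Fin 3) (p₀ : V × Fin 3).1 = 0 := by
        have := congrFun hl0 (p₀ : V × Fin 3).1
        simpa [Finset.sum_apply] using this
      rw [Finset.sum_eq_single p₀] at hsum
      · have h20 : (p₀ : V × Fin 3).2 = 0 := hcase p₀ hp₀
        rw [show iasCol A (p₀ : V × Fin 3) (p₀ : V × Fin 3).1 = 1 by
          simp [iasCol, h20]] at hsum
        rw [mul_one] at hsum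
        exact hp₀ hsum
      · intro s _ hsne
        by_cases hls : l s = 0
        · rw [hls, zero_mul]
        · have h20 : (s : V × Fin 3).2 = 0 := hcase s hls
          have hne : (p₀ : V × Fin 3).1 ≠ (s : V × Fin 3).1 := by
            intro h
            exact hsne (Subtype.ext (htr _ s.2 _ p₀.2 h.symm))
          rw [show iasCol A (s : V × Fin 3) (p₀ : V × Fin 3).1 = 0 by
            simp [iasCol, h20, hne]]
          rw [mul_zero]
      · intro hmem
        exact absurd (Finset.mem_univ _) hmem
  -- hence c < q
  have hcq : c < q := by
    have hle : c ≤ q := by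
      rw [hc, hgspan]
      calc Module.finrank (ZMod 2) (Submodule.span (ZMod 2) (Set.range g))
          ≤ (Set.range g).toFinset.card := finrank_span_le_card _
        _ = Fintype.card ↥(Set.range g) := Set.toFinset_card _
        _ ≤ Fintype.card ↥X := Fintype.card_range_le g
        _ = q := hqcard
    rcases lt_or_eq_of_le hle with h | h
    · exact h
    · exfalso
      apply hgdep
      rw [linearIndependent_iff_card_eq_finrank_span, Set.finrank]
      rw [hc, hgspan] at h
      rw [hqcard, h]
  -- assemble the vertical separation
  have hcompl : (tauSet X)ᶜ = tauSet Xᶜ := by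
    ext p
    simp [tauSet]
  have hnc : X.ncard + Xᶜ.ncard = Fintype.card V := by
    rw [Set.ncard_add_ncard_compl, Nat.card_eq_fintype_card]
  have r₁ : iasRank A (tauSet X) = q + c := by
    rw [aux_iasRank_tauSet, hXq, hc]
  have r₂ : iasRank A (tauSet X)ᶜ = Xᶜ.ncard + c := by
    rw [hcompl, aux_iasRank_tauSet, aux_cutRank_compl A hA, hc]
  have rU : iasRank A Set.univ = Fintype.card V := aux_iasRank_univ A
  have hvs : VerticalSep A (2 * c + 1) (tauSet X) := by
    refine ⟨by omega, ?_, ?_, ?_⟩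
    · rw [iasLambda, r₁, r₂, rU]
      omega
    · rw [r₁]; omega
    · rw [r₂]; omega
  have hmem : (2 * c + 1) ∈ ({k : ℕ | ∃ S, VerticalSep A k S}
      ∪ {iasRank A Set.univ}) :=
    Set.mem_union_left _ ⟨tauSet X, hvs⟩
  have := Nat.sInf_le hmem
  rw [iasKappa] at *
  omega
end
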